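/- Let ζ₁,…,ζ_N ∈ ℝ, let ν = (1/N) Σ_{i=1}^N δ_{ζᵢ}, and let ε > 0. Then sup{ E_{ζ∼Q}[ζ] : Q ∈ 𝒫₂(ℝ), W₂(Q, ν) ≤ ε } = (1/N) Σ_{i=1}^N ζᵢ + ε and inf{ E_{ζ∼Q}[ζ] : Q ∈ 𝒫₂(ℝ), W₂(Q, ν) ≤ ε } = (1/N) Σ_{i=1}^N ζᵢ − ε. -/

import Mathlib

open MeasureTheory
open scoped ENNReal

/-- The `p`-th power transport cost of a coupling `π` with ground cost `d`. -/
noncomputable def transportCost {α : Type*} [MeasurableSpace α]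
    (p : ℝ) (d : α → α → ℝ) (π : Measure (α × α)) : ℝ≥0∞ :=
  ∫⁻ w, ENNReal.ofReal (d w.1 w.2 ^ p) ∂π

/-- The `p`-Wasserstein distance between `μ` and `ν` with ground cost `d`:
the infimum of the `p`-th root of the transport cost over all couplings. -/
noncomputable def wassersteinDist {α : Type*} [MeasurableSpace α]
    (p : ℝ) (d : α → α → ℝ) (μ ν : Measure α) : ℝ≥0∞ :=
  (⨅ (π : Measure (α × α)) (_ : IsProbabilityMeasure π ∧
      π.map Prod.fst = μ ∧ π.map Prod.snd = ν), transportCost p d π) ^ (1 / p)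

/-- The empirical distribution of the points `ξ 1, …, ξ N`. -/
noncomputable def empMeasure {α : Type*} [MeasurableSpace α] {N : ℕ}
    (ξ : Fin N → α) : Measure α :=
  (N : ℝ≥0∞)⁻¹ • ∑ i, Measure.dirac (ξ i)

/-- Probability measures on `ℝ` supported on `S`, with finite `p`-th moment, within
`p`-Wasserstein distance (with cost `|·|`) `ε` of `ν`. -/
def realWassersteinBall (p : ℝ) (S : Set ℝ) (ν : Measure ℝ) (ε : ℝ) : Set (Measure ℝ) :=
  {Q | IsProbabilityMeasure Q ∧ Q Sᶜ = 0 ∧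
    (∫⁻ t, ENNReal.ofReal (|t| ^ p) ∂Q) < ⊤ ∧
    wassersteinDist p (fun a b => |a - b|) Q ν ≤ ENNReal.ofReal ε}

section Helpers

variable {α β : Type*} [MeasurableSpace α] [MeasurableSpace β] {N : ℕ}

lemma map_finset_sum_measure {ι : Type*} (s : Finset ι) (μ : ι → Measure α) {f : α → β}
    (hf : Measurable f) : (∑ i ∈ s, μ i).map f = ∑ i ∈ s, (μ i).map f := by
  classical
  induction s using Finset.induction with
  | empty => simp
  | insert _ _ h ih => simp [Finset.sum_insert h, Measure.map_add _ _ hf, ih]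

lemma map_empMeasure (ξ : Fin N → α) {f : α → β} (hf : Measurable f) :
    (empMeasure ξ).map f = empMeasure (fun i => f (ξ i)) := by
  simp [empMeasure, Measure.map_smul, map_finset_sum_measure _ _ hf, Measure.map_dirac' hf]

lemma empMeasure_prob (hN : 0 < N) (ξ : Fin N → α) : IsProbabilityMeasure (empMeasure ξ) := by
  constructor
  simp [empMeasure, Measure.smul_apply, Measure.coe_finset_sum, Finset.sum_apply]
  rw [ENNReal.inv_mul_cancel] <;> simp [hN.ne']

lemma lintegral_empMeasure (ξ : Fin N → α) {f : α → ℝ≥0∞} (hf : Measurable f) :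
    ∫⁻ t, f t ∂(empMeasure ξ) = (N : ℝ≥0∞)⁻¹ * ∑ i, f (ξ i) := by
  simp [empMeasure, lintegral_smul_measure, lintegral_finset_sum_measure,
    lintegral_dirac' _ hf]

lemma integrable_dirac'' {f : α → ℝ} (hf : StronglyMeasurable f) (a : α) :
    Integrable f (Measure.dirac a) := by
  refine ⟨hf.aestronglyMeasurable, ?_⟩
  rw [HasFiniteIntegral, lintegral_dirac' _ hf.measurable.enorm]
  exact ENNReal.coe_lt_top

lemma integral_empMeasure (ξ : Fin N → α) {f : α → ℝ} (hf : StronglyMeasurable f) :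
    ∫ t, f t ∂(empMeasure ξ) = (N : ℝ)⁻¹ * ∑ i, f (ξ i) := by
  rw [empMeasure, integral_smul_measure,
    integral_finset_sum_measure (fun i _ => integrable_dirac'' hf (ξ i))]
  simp [integral_dirac' _ _ hf, ENNReal.toReal_inv, smul_eq_mul]

lemma abs_le_one_add_sq (t : ℝ) :
    ENNReal.ofReal |t| ≤ 1 + ENNReal.ofReal (|t| ^ (2:ℝ)) := by
  have h2 : |t| ^ (2:ℝ) = |t| ^ 2 := by
    rw [show (2:ℝ) = ((2:ℕ):ℝ) by norm_num, Real.rpow_natCast]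
  rcases le_or_gt (|t|) 1 with h | h
  · calc ENNReal.ofReal |t| ≤ ENNReal.ofReal 1 := ENNReal.ofReal_le_ofReal h
      _ = 1 := ENNReal.ofReal_one
      _ ≤ _ := le_self_add
  · have : |t| ≤ |t| ^ (2:ℝ) := by rw [h2]; nlinarith [abs_nonneg t]
    calc ENNReal.ofReal |t| ≤ ENNReal.ofReal (|t| ^ (2:ℝ)) := ENNReal.ofReal_le_ofReal this
      _ ≤ _ := le_add_self

lemma integrable_id_of_moment {Q : Measure ℝ} [IsProbabilityMeasure Q]
    (hmom : (∫⁻ t, ENNReal.ofReal (|t| ^ (2:ℝ)) ∂Q) < ⊤) :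
    Integrable (fun t : ℝ => t) Q := by
  refine ⟨aestronglyMeasurable_id, ?_⟩
  rw [HasFiniteIntegral]
  calc ∫⁻ t, ‖t‖ₑ ∂Q = ∫⁻ t, ENNReal.ofReal |t| ∂Q := by
        simp_rw [Real.enorm_eq_ofReal_abs]
    _ ≤ ∫⁻ t, (1 + ENNReal.ofReal (|t| ^ (2:ℝ))) ∂Q :=
        lintegral_mono abs_le_one_add_sq
    _ = 1 * Q Set.univ + ∫⁻ t, ENNReal.ofReal (|t| ^ (2:ℝ)) ∂Q := by
        rw [lintegral_add_left measurable_const, lintegral_const]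
    _ < ⊤ := ENNReal.add_lt_top.mpr ⟨by simp, hmom⟩

lemma integrable_id_empMeasure (hN : 0 < N) (ζ : Fin N → ℝ) :
    Integrable (fun t : ℝ => t) (empMeasure ζ) := by
  refine ⟨aestronglyMeasurable_id, ?_⟩
  rw [HasFiniteIntegral, lintegral_empMeasure _ measurable_enorm]
  exact ENNReal.mul_lt_top (by simp [hN]) (by simp [ENNReal.sum_lt_top])

lemma holder_step {π : Measure (ℝ × ℝ)} [IsProbabilityMeasure π] {c : ℝ} (hc : 0 < c)
    (hcost : transportCost 2 (fun a b => |a - b|) π ≤ ENNReal.ofReal (c ^ 2)) :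
    ∫⁻ w, ENNReal.ofReal |w.1 - w.2| ∂π ≤ ENNReal.ofReal c := by
  set F : ℝ × ℝ → ℝ≥0∞ := fun w => ENNReal.ofReal |w.1 - w.2| with hF
  have hFm : AEMeasurable F π :=
    ((measurable_fst.sub measurable_snd).abs.ennreal_ofReal).aemeasurable
  have hpq : (2:ℝ).HolderConjugate 2 := Real.holderConjugate_iff.mpr ⟨by norm_num, by norm_num⟩
  have hH := ENNReal.lintegral_mul_le_Lp_mul_Lq π hpq hFm aemeasurable_const (g := 1)
  have hF2 : ∀ w : ℝ × ℝ, F w ^ (2:ℝ) = ENNReal.ofReal (|w.1 - w.2| ^ (2:ℝ)) := fun w =>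
    ENNReal.ofReal_rpow_of_nonneg (abs_nonneg _) (by norm_num)
  simp only [Pi.mul_apply, Pi.one_apply, mul_one, ENNReal.one_rpow, lintegral_const,
    measure_univ, one_mul] at hH
  calc ∫⁻ w, F w ∂π ≤ (∫⁻ w, F w ^ (2:ℝ) ∂π) ^ ((1:ℝ)/2) := hH
    _ = (transportCost 2 (fun a b => |a - b|) π) ^ ((1:ℝ)/2) := by
        simp only [transportCost]
        congr 1
        exact lintegral_congr fun w => by rw [hF2]
    _ ≤ (ENNReal.ofReal (c ^ 2)) ^ ((1:ℝ)/2) := ENNReal.rpow_le_rpow hcost (by norm_num)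
    _ = ENNReal.ofReal c := by
        rw [← Real.rpow_natCast c 2, ← ENNReal.ofReal_rpow_of_pos hc, ← ENNReal.rpow_mul]
        norm_num

lemma key_bound (hN : 0 < N) (ζ : Fin N → ℝ) {ε : ℝ} (hε : 0 < ε) {Q : Measure ℝ}
    (hQ : Q ∈ realWassersteinBall 2 Set.univ (empMeasure ζ) ε) :
    |∫ t, t ∂Q - (N : ℝ)⁻¹ * ∑ i, ζ i| ≤ ε := by
  obtain ⟨hprob, -, hmom, hW⟩ := hQ
  haveI := hprob
  have hQint : Integrable (fun t : ℝ => t) Q := integrable_id_of_moment hmom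
  have hνint := integrable_id_empMeasure hN ζ
  rw [wassersteinDist] at hW
  have hI : (⨅ (π : Measure (ℝ × ℝ)) (_ : IsProbabilityMeasure π ∧
      π.map Prod.fst = Q ∧ π.map Prod.snd = empMeasure ζ),
      transportCost 2 (fun a b => |a - b|) π) ≤ ENNReal.ofReal (ε ^ 2) := by
    have h2 := ENNReal.rpow_le_rpow hW (by norm_num : (0:ℝ) ≤ 2)
    rwa [← ENNReal.rpow_mul, ENNReal.ofReal_rpow_of_pos hε,
      show (1 / (2:ℝ)) * 2 = 1 by norm_num, ENNReal.rpow_one,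
      show ε ^ (2:ℝ) = ε ^ 2 by rw [show (2:ℝ) = ((2:ℕ):ℝ) by norm_num, Real.rpow_natCast]]
      at h2
  refine le_of_forall_pos_le_add fun δ hδ => ?_
  have hlt := lt_of_le_of_lt hI
    ((ENNReal.ofReal_lt_ofReal_iff (by positivity)).mpr (by nlinarith : ε ^ 2 < (ε + δ) ^ 2))
  rw [iInf_lt_iff] at hlt
  obtain ⟨π, hlt⟩ := hlt
  rw [iInf_lt_iff] at hlt
  obtain ⟨⟨hπ, hfst, hsnd⟩, hcost⟩ := hlt
  haveI := hπ
  have h1 : Integrable (fun w : ℝ × ℝ => w.1) π := by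
    have h := integrable_map_measure (μ := π) (f := Prod.fst) (g := fun t : ℝ => t)
      (by rw [hfst]; exact aestronglyMeasurable_id) measurable_fst.aemeasurable
    rw [hfst] at h
    exact h.mp hQint
  have h2 : Integrable (fun w : ℝ × ℝ => w.2) π := by
    have h := integrable_map_measure (μ := π) (f := Prod.snd) (g := fun t : ℝ => t)
      (by rw [hsnd]; exact aestronglyMeasurable_id) measurable_snd.aemeasurable
    rw [hsnd] at h
    exact h.mp hνint
  have e1 : ∫ t, t ∂Q = ∫ w : ℝ × ℝ, w.1 ∂π := by
    rw [← hfst, integral_map measurable_fst.aemeasurable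
      (by rw [hfst]; exact aestronglyMeasurable_id)]
  have hmean : ∫ t, t ∂(empMeasure ζ) = (N : ℝ)⁻¹ * ∑ i, ζ i := by
    simpa using integral_empMeasure (f := fun t : ℝ => t) ζ stronglyMeasurable_id
  have e2 : (N : ℝ)⁻¹ * ∑ i, ζ i = ∫ w : ℝ × ℝ, w.2 ∂π := by
    rw [← hmean, ← hsnd, integral_map measurable_snd.aemeasurable
      (by rw [hsnd]; exact aestronglyMeasurable_id)]
  have e3 : ∫ t, t ∂Q - (N : ℝ)⁻¹ * ∑ i, ζ i = ∫ w : ℝ × ℝ, (w.1 - w.2) ∂π := by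
    rw [e1, e2, integral_sub h1 h2]
  rw [e3]
  have habs : |∫ w : ℝ × ℝ, (w.1 - w.2) ∂π| ≤ ∫ w : ℝ × ℝ, |w.1 - w.2| ∂π := by
    simpa [Real.norm_eq_abs] using
      norm_integral_le_integral_norm (μ := π) (fun w : ℝ × ℝ => w.1 - w.2)
  have e4 : ∫ w : ℝ × ℝ, |w.1 - w.2| ∂π
      = (∫⁻ w, ENNReal.ofReal |w.1 - w.2| ∂π).toReal :=
    integral_eq_lintegral_of_nonneg_ae (Filter.Eventually.of_forall fun w => abs_nonneg _)
      ((measurable_fst.sub measurable_snd).abs).aestronglyMeasurable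
  refine habs.trans ?_
  rw [e4]
  exact ENNReal.toReal_le_of_le_ofReal (by positivity)
    (holder_step (by positivity) hcost.le)

lemma shift_integral (ζ : Fin N → ℝ) (c : ℝ) :
    ∫ t, t ∂(empMeasure (fun i => ζ i + c)) = (N : ℝ)⁻¹ * ∑ i, ζ i + (N : ℝ)⁻¹ * N * c := by
  have h := integral_empMeasure (f := fun t : ℝ => t)
    (fun i => ζ i + c) stronglyMeasurable_id
  rw [h, Finset.sum_add_distrib, Finset.sum_const, Finset.card_univ, Fintype.card_fin,
    mul_add, nsmul_eq_mul, mul_assoc]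

lemma shift_mem (hN : 0 < N) (ζ : Fin N → ℝ) {ε c : ℝ} (hε : 0 < ε) (hc : |c| = ε) :
    empMeasure (fun i => ζ i + c) ∈ realWassersteinBall 2 Set.univ (empMeasure ζ) ε := by
  refine ⟨empMeasure_prob hN _, by simp, ?_, ?_⟩
  · rw [lintegral_empMeasure _ (by measurability)]
    exact ENNReal.mul_lt_top (by simp [hN])
      (ENNReal.sum_lt_top.mpr fun i _ => ENNReal.ofReal_lt_top)
  · set π : Measure (ℝ × ℝ) := empMeasure (fun i => (ζ i + c, ζ i)) with hπ
    haveI := empMeasure_prob hN (fun i => (ζ i + c, ζ i))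
    have hval : ∀ i : Fin N, ENNReal.ofReal (|(ζ i + c) - ζ i| ^ (2:ℝ))
        = ENNReal.ofReal (ε ^ 2) := by
      intro i
      rw [add_sub_cancel_left, hc, show (2:ℝ) = ((2:ℕ):ℝ) by norm_num, Real.rpow_natCast]
    have hcost : transportCost 2 (fun a b => |a - b|) π = ENNReal.ofReal (ε ^ 2) := by
      rw [transportCost, lintegral_empMeasure _ (by measurability)]
      simp only [hval]
      rw [Finset.sum_const, Finset.card_univ, Fintype.card_fin, nsmul_eq_mul, ← mul_assoc,
        ENNReal.inv_mul_cancel (by simp [hN.ne']) (by simp), one_mul]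
    rw [wassersteinDist]
    have hb : (⨅ (π' : Measure (ℝ × ℝ)) (_ : IsProbabilityMeasure π' ∧
        π'.map Prod.fst = empMeasure (fun i => ζ i + c) ∧
        π'.map Prod.snd = empMeasure ζ), transportCost 2 (fun a b => |a - b|) π')
        ≤ ENNReal.ofReal (ε ^ 2) := by
      refine iInf_le_of_le π (iInf_le_of_le ⟨inferInstance, ?_, ?_⟩ hcost.le)
      · exact map_empMeasure _ measurable_fst
      · exact map_empMeasure _ measurable_snd
    calc _ ≤ (ENNReal.ofReal (ε ^ 2)) ^ ((1:ℝ)/2) := ENNReal.rpow_le_rpow hb (by norm_num)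
      _ = ENNReal.ofReal ε := by
          rw [← Real.rpow_natCast ε 2, ← ENNReal.ofReal_rpow_of_pos hε, ← ENNReal.rpow_mul]
          norm_num

end Helpers

/-- Extremal expected values over a `2`-Wasserstein ball around an empirical
distribution on `ℝ`: `sup = mean + ε` and `inf = mean − ε`. -/
theorem statement17 {N : ℕ} (hN : 0 < N)
    (ζ : Fin N → ℝ) (ε : ℝ) (hε : 0 < ε) :
    sSup ((fun Q : Measure ℝ => ((∫ t, t ∂Q : ℝ) : EReal)) ''
        realWassersteinBall 2 Set.univ (empMeasure ζ) ε) =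
      (((1 / (N : ℝ)) * ∑ i, ζ i + ε : ℝ) : EReal) ∧
    sInf ((fun Q : Measure ℝ => ((∫ t, t ∂Q : ℝ) : EReal)) ''
        realWassersteinBall 2 Set.univ (empMeasure ζ) ε) =
      (((1 / (N : ℝ)) * ∑ i, ζ i - ε : ℝ) : EReal) := by
  have hNR : (N : ℝ) ≠ 0 := Nat.cast_ne_zero.mpr hN.ne'
  have hcan : (N : ℝ)⁻¹ * N = 1 := inv_mul_cancel₀ hNR
  constructor
  · apply le_antisymm
    · refine sSup_le ?_
      rintro x ⟨Q, hQ, rfl⟩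
      have h := (abs_le.mp (key_bound hN ζ hε hQ)).2
      have : ∫ t, t ∂Q ≤ (1 / (N : ℝ)) * ∑ i, ζ i + ε := by
        rw [one_div]; linarith
      exact EReal.coe_le_coe_iff.mpr this
    · refine le_sSup ⟨empMeasure (fun i => ζ i + ε),
        shift_mem hN ζ hε (abs_of_pos hε), ?_⟩
      show ((∫ t, t ∂(empMeasure fun i => ζ i + ε) : ℝ) : EReal) = _
      rw [shift_integral ζ ε, hcan, one_mul, one_div]
  · apply le_antisymm
    · refine sInf_le ⟨empMeasure (fun i => ζ i + (-ε)),
        shift_mem hN ζ hε (by rw [abs_neg, abs_of_pos hε]), ?_⟩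
      show ((∫ t, t ∂(empMeasure fun i => ζ i + (-ε)) : ℝ) : EReal) = _
      rw [shift_integral ζ (-ε), hcan, one_mul, one_div, ← sub_eq_add_neg]
    · refine le_sInf ?_
      rintro x ⟨Q, hQ, rfl⟩
      have h := (abs_le.mp (key_bound hN ζ hε hQ)).1
      have : (1 / (N : ℝ)) * ∑ i, ζ i - ε ≤ ∫ t, t ∂Q := by
        rw [one_div]; linarith
      exact EReal.coe_le_coe_iff.mpr this
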